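/- Fix integers q₁,...,q₅ with q₂,q₃,q₄ > 0, q₅ < 0, and q₁+q₅ < 0, set q_m = max{q₂,q₃,q₄}, and let θ ∈ (0, π/2) satisfy sin θ < 1/(16√q_m). Let A₀ ∈ SU(5) be the matrix with rows (cos θ, 0, 0, 0, sin θ), (0,1,0,0,0), (0,0,0,1,0), (-sin θ, 0, 0, 0, cos θ), (0,0,1,0,0). Then A₀ ∈ V; in particular V is nonempty. -/

import Mathlib

open Finset

noncomputable section

/-- SU(5): 5×5 special unitary complex matrices. -/
def SU5 : Set (Matrix (Fin 5) (Fin 5) ℂ) :=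
  {A | A * A.conjTranspose = 1 ∧ A.det = 1}

/-- The image of the embedding Sp(2) ↪ SU(5). -/
def Sp2 : Set (Matrix (Fin 5) (Fin 5) ℂ) :=
  {h | h ∈ SU5 ∧
    (∀ i : Fin 5, h i 4 = if i = 4 then 1 else 0) ∧
    (∀ i : Fin 5, h 4 i = if i = 4 then 1 else 0) ∧
    (∀ i j : Fin 5, i < 2 → j < 2 →
      h (i + 2) (j + 2) = (starRingEnd ℂ) (h i j) ∧
      h (i + 2) j = -(starRingEnd ℂ) (h i (j + 2)))}

/-- q_m = max{q₂,q₃,q₄} (0-indexed: entries 1,2,3). -/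
def qm (q : Fin 5 → ℤ) : ℤ := max (q 1) (max (q 2) (q 3))

/-- Squared norm of the first four entries of row `i` of `B`. -/
def rowNormSq (B : Matrix (Fin 5) (Fin 5) ℂ) (i : Fin 5) : ℝ :=
  ∑ j : Fin 4, ‖B i j.castSucc‖ ^ 2

/-- The open set V ⊆ SU(5). -/
def V (q : Fin 5 → ℤ) : Set (Matrix (Fin 5) (Fin 5) ℂ) :=
  {B | B ∈ SU5 ∧
    (∀ i j : Fin 5, (i, j) ∉ ({(0,0),(1,1),(2,3),(3,4),(4,2)} : Set (Fin 5 × Fin 5)) →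
      ‖B i j‖ < 1 / (16 * Real.sqrt (qm q))) ∧
    7 / 8 < rowNormSq B 4 ∧
    Real.sqrt (rowNormSq B 0) < Real.sqrt (rowNormSq B 4) ∧
    0 < ∑ ℓ : Fin 5, (‖B ℓ 1‖ ^ 2 + ‖B ℓ 3‖ ^ 2) * (q ℓ : ℝ)}

set_option maxHeartbeats 1000000 in
theorem stmt11 (q : Fin 5 → ℤ) (h2 : 0 < q 1) (h3 : 0 < q 2) (h4 : 0 < q 3)
    (h5 : q 4 < 0) (h15 : q 0 + q 4 < 0)
    (θ : ℝ) (hθ0 : 0 < θ) (hθ1 : θ < Real.pi / 2)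
    (hθ : Real.sin θ < 1 / (16 * Real.sqrt (qm q))) :
    (!![(Real.cos θ : ℂ), 0, 0, 0, (Real.sin θ : ℂ);
        0, 1, 0, 0, 0;
        0, 0, 0, 1, 0;
        (-(Real.sin θ) : ℂ), 0, 0, 0, (Real.cos θ : ℂ);
        0, 0, 1, 0, 0] ∈ V q) ∧ (V q).Nonempty := by
  have hqm : (0:ℤ) < qm q := lt_of_lt_of_le h2 (le_max_left _ _)
  have hqmR : (0:ℝ) < (qm q : ℤ) := by exact_mod_cast hqm
  have hsq : 0 < Real.sqrt (qm q) := Real.sqrt_pos.2 hqmR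
  have hb : 0 < 1 / (16 * Real.sqrt (qm q)) := by positivity
  have hsin : 0 < Real.sin θ := Real.sin_pos_of_pos_of_lt_pi hθ0
    (lt_trans hθ1 (by linarith [Real.pi_pos]))
  have hcos : 0 < Real.cos θ := Real.cos_pos_of_mem_Ioo ⟨by linarith, hθ1⟩
  have hpythR : Real.sin θ ^ 2 + Real.cos θ ^ 2 = 1 := Real.sin_sq_add_cos_sq θ
  have hpyth : (Real.sin θ : ℂ)^2 + (Real.cos θ : ℂ)^2 = 1 := by
    exact_mod_cast congrArg (Complex.ofReal) hpythR
  have c0 : Fin.castSucc (0 : Fin 4) = (0 : Fin 5) := rfl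
  have c1 : Fin.castSucc (1 : Fin 4) = (1 : Fin 5) := rfl
  have c2 : Fin.castSucc (2 : Fin 4) = (2 : Fin 5) := rfl
  have c3 : Fin.castSucc (3 : Fin 4) = (3 : Fin 5) := rfl
  have hmem : (!![(Real.cos θ : ℂ), 0, 0, 0, (Real.sin θ : ℂ);
        0, 1, 0, 0, 0;
        0, 0, 0, 1, 0;
        (-(Real.sin θ) : ℂ), 0, 0, 0, (Real.cos θ : ℂ);
        0, 0, 1, 0, 0] ∈ V q) := by
    refine ⟨⟨?_, ?_⟩, ?_, ?_, ?_, ?_⟩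
    · ext i j
      fin_cases i <;> fin_cases j <;>
        simp [Matrix.mul_apply, Fin.sum_univ_five, Matrix.conjTranspose_apply,
          Matrix.one_apply, -Complex.ofReal_cos, -Complex.ofReal_sin,
          Complex.conj_ofReal] <;>
        ring_nf <;> (try linear_combination hpyth)
    · simp [Matrix.det_succ_row_zero, Fin.sum_univ_succ, -Complex.ofReal_cos,
        -Complex.ofReal_sin]
      norm_num [Fin.succAbove, Fin.lt_def, Fin.ext_iff, -Complex.ofReal_cos,
        -Complex.ofReal_sin]
      have e1 : (Fin.succ (2 : Fin 3)).castSucc = (3 : Fin 5) := rfl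
      have e2 : Fin.castSucc (2 : Fin 4) = (2 : Fin 5) := rfl
      simp only [e2, show Fin.castSucc (2 : Fin 3) = (2 : Fin 4) from rfl]
      norm_num [-Complex.ofReal_cos, -Complex.ofReal_sin, Matrix.cons_val_two, Matrix.vecHead, Matrix.vecTail]
      ring_nf
      linear_combination hpyth
    · intro i j hij
      fin_cases i <;> fin_cases j <;>
        simp_all [-Complex.ofReal_cos, -Complex.ofReal_sin, Matrix.vecHead,
          Matrix.vecTail, Complex.norm_real, Real.norm_eq_abs, abs_of_pos hsin, map_neg] <;>
        assumption
    · simp [rowNormSq, Fin.sum_univ_four]; norm_num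
    · have : rowNormSq (!![(Real.cos θ : ℂ), 0, 0, 0, (Real.sin θ : ℂ);
        0, 1, 0, 0, 0;
        0, 0, 0, 1, 0;
        (-(Real.sin θ) : ℂ), 0, 0, 0, (Real.cos θ : ℂ);
        0, 0, 1, 0, 0]) 0 = Real.cos θ ^ 2 := by
        simp [rowNormSq, Fin.sum_univ_four, -Complex.ofReal_cos, -Complex.ofReal_sin,
          Complex.norm_real, Real.norm_eq_abs, abs_of_pos hcos]
      have h4' : rowNormSq (!![(Real.cos θ : ℂ), 0, 0, 0, (Real.sin θ : ℂ);
        0, 1, 0, 0, 0;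
        0, 0, 0, 1, 0;
        (-(Real.sin θ) : ℂ), 0, 0, 0, (Real.cos θ : ℂ);
        0, 0, 1, 0, 0]) 4 = 1 := by
        simp [rowNormSq, Fin.sum_univ_four]
      rw [this, h4']
      apply Real.sqrt_lt_sqrt (sq_nonneg _)
      nlinarith [sq_nonneg (Real.sin θ)]
    · have : ∑ ℓ : Fin 5, (‖(!![(Real.cos θ : ℂ), 0, 0, 0, (Real.sin θ : ℂ);
        0, 1, 0, 0, 0;
        0, 0, 0, 1, 0;
        (-(Real.sin θ) : ℂ), 0, 0, 0, (Real.cos θ : ℂ);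
        0, 0, 1, 0, 0]) ℓ 1‖ ^ 2 + ‖(!![(Real.cos θ : ℂ), 0, 0, 0, (Real.sin θ : ℂ);
        0, 1, 0, 0, 0;
        0, 0, 0, 1, 0;
        (-(Real.sin θ) : ℂ), 0, 0, 0, (Real.cos θ : ℂ);
        0, 0, 1, 0, 0]) ℓ 3‖ ^ 2) * (q ℓ : ℝ) = (q 1 : ℝ) + (q 2 : ℝ) := by
        simp [Fin.sum_univ_five, -Complex.ofReal_cos, -Complex.ofReal_sin]
      rw [this]
      have hq1 : (0:ℝ) < (q 1 : ℝ) := by exact_mod_cast h2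
      have hq2 : (0:ℝ) < (q 2 : ℝ) := by exact_mod_cast h3
      linarith
  exact ⟨hmem, ⟨_, hmem⟩⟩
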